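/- Any CPTP map M of the general LOCC* form M = ∑_{i_A,i_B,o_A,o_B} p(i_A,i_B|o_A,o_B) A_{o_A|i_A} ⊗ B_{o_B|i_B}, where p is a conditional probability distribution and {A_{o_A|i_A}}_{o_A}, {B_{o_B|i_B}}_{o_B} are quantum instruments, can be rewritten in the ∞-shaped loop form M = ∑_{a,b} Ã_{a|b} ⊗ B̃_{b|a} where {Ã_{a|b}}_a and {B̃_{b|a}}_b are quantum instruments, via the substitution Ã_{(i_B,x)|(o_A,o_B)} := ∑_{i_A} p(i_A,i_B|o_A,o_B) A_{x|i_A} and B̃_{(o_A,o_B)|(i_B,x)} := δ_{x,o_A} B_{o_B|i_B}. -/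

import Mathlib

open Matrix BigOperators ComplexOrder Kronecker

noncomputable section

abbrev Mat (n : Type) [Fintype n] [DecidableEq n] : Type := Matrix n n ℂ

def sliceM {n : Type} [Fintype n] [DecidableEq n] {k : Type} (X : Matrix (n × k) (n × k) ℂ) (i j : k) :
    Matrix n n ℂ := Matrix.of fun a b => X (a, i) (b, j)

def IsCP {n m : Type} [Fintype n][DecidableEq n][Fintype m][DecidableEq m]
    (M : Mat n →ₗ[ℂ] Mat m) : Prop :=
  ∀ (d : ℕ) (X : Matrix (n × Fin d) (n × Fin d) ℂ), X.PosSemidef →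
    (Matrix.of fun p q : m × Fin d => (M (sliceM X p.2 q.2)) p.1 q.1).PosSemidef

def IsTP {n m : Type} [Fintype n][DecidableEq n][Fintype m][DecidableEq m]
    (M : Mat n →ₗ[ℂ] Mat m) : Prop := ∀ X : Mat n, (M X).trace = X.trace

def tensorMap {nA mA nB mB : Type} [Fintype nA][DecidableEq nA][Fintype mA][DecidableEq mA]
    [Fintype nB][DecidableEq nB][Fintype mB][DecidableEq mB]
    (A : Mat nA →ₗ[ℂ] Mat mA) (B : Mat nB →ₗ[ℂ] Mat mB) :
    Mat (nA × nB) →ₗ[ℂ] Mat (mA × mB) where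
  toFun X := ∑ c : nA, ∑ c' : nA, ∑ d : nB, ∑ d' : nB,
    X (c, d) (c', d') • ((A (Matrix.single c c' 1)) ⊗ₖ (B (Matrix.single d d' 1)))
  map_add' X Y := by
    simp [Matrix.add_apply, add_smul, Finset.sum_add_distrib]
  map_smul' r X := by
    simp [Matrix.smul_apply, smul_smul, Finset.smul_sum]

section Aux

lemma psd_add' {n : Type} [Fintype n] {M N : Matrix n n ℂ}
    (hM : M.PosSemidef) (hN : N.PosSemidef) : (M + N).PosSemidef := by
  refine ⟨hM.1.add hN.1, fun x => ?_⟩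
  exact (hM.add hN).2 x

lemma psd_smul' {n : Type} [Fintype n] {M : Matrix n n ℂ} (hM : M.PosSemidef)
    {c : ℝ} (hc : 0 ≤ c) : ((c : ℂ) • M).PosSemidef := by
  refine ⟨?_, fun x => ?_⟩
  · unfold Matrix.IsHermitian
    rw [conjTranspose_smul, hM.1.eq]
    simp
  · exact (hM.smul (show (0:ℂ) ≤ (c:ℂ) by exact_mod_cast hc)).2 x

lemma psd_sum' {n ι : Type} [Fintype n] (s : Finset ι) (f : ι → Matrix n n ℂ)
    (h : ∀ i ∈ s, (f i).PosSemidef) : (∑ i ∈ s, f i).PosSemidef := by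
  classical
  induction s using Finset.induction with
  | empty => simpa using Matrix.PosSemidef.zero
  | insert _ _ hx ih =>
    rw [Finset.sum_insert hx]
    exact psd_add' (h _ (Finset.mem_insert_self _ _))
      (ih fun i hi => h i (Finset.mem_insert_of_mem hi))

variable {nA mA nB mB : Type} [Fintype nA][DecidableEq nA][Fintype mA][DecidableEq mA]
    [Fintype nB][DecidableEq nB][Fintype mB][DecidableEq mB]

lemma tensorMap_apply (A : Mat nA →ₗ[ℂ] Mat mA) (B : Mat nB →ₗ[ℂ] Mat mB) (X : Mat (nA × nB)) :
    tensorMap A B X = ∑ c : nA, ∑ c' : nA, ∑ d : nB, ∑ d' : nB,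
      X (c, d) (c', d') • ((A (Matrix.single c c' 1)) ⊗ₖ (B (Matrix.single d d' 1))) := rfl

lemma tensorMap_smul_left (c : ℂ) (A : Mat nA →ₗ[ℂ] Mat mA) (B : Mat nB →ₗ[ℂ] Mat mB) :
    tensorMap (c • A) B = c • tensorMap A B := by
  ext X : 1
  simp only [tensorMap_apply, LinearMap.smul_apply, Matrix.smul_kronecker, Finset.smul_sum,
    smul_comm c]

lemma tensorMap_add_left (A A' : Mat nA →ₗ[ℂ] Mat mA) (B : Mat nB →ₗ[ℂ] Mat mB) :
    tensorMap (A + A') B = tensorMap A B + tensorMap A' B := by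
  ext X : 1
  simp only [tensorMap_apply, LinearMap.add_apply, Matrix.add_kronecker, smul_add,
    Finset.sum_add_distrib]

lemma tensorMap_zero_left (B : Mat nB →ₗ[ℂ] Mat mB) :
    tensorMap (0 : Mat nA →ₗ[ℂ] Mat mA) B = 0 := by
  ext X : 1
  simp [tensorMap_apply]

lemma tensorMap_sum_left {ι : Type} (s : Finset ι) (A : ι → (Mat nA →ₗ[ℂ] Mat mA))
    (B : Mat nB →ₗ[ℂ] Mat mB) :
    tensorMap (∑ i ∈ s, A i) B = ∑ i ∈ s, tensorMap (A i) B := by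
  classical
  induction s using Finset.induction with
  | empty => simpa using tensorMap_zero_left B
  | insert _ _ hx ih => rw [Finset.sum_insert hx, Finset.sum_insert hx, tensorMap_add_left, ih]

lemma tensorMap_zero_right (A : Mat nA →ₗ[ℂ] Mat mA) :
    tensorMap A (0 : Mat nB →ₗ[ℂ] Mat mB) = 0 := by
  ext X : 1
  simp [tensorMap_apply]

lemma isCP_zero {n m : Type} [Fintype n][DecidableEq n][Fintype m][DecidableEq m] :
    IsCP (0 : Mat n →ₗ[ℂ] Mat m) := by
  intro d X hX
  have h : (Matrix.of fun p q : m × Fin d =>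
      ((0 : Mat n →ₗ[ℂ] Mat m) (sliceM X p.2 q.2)) p.1 q.1) = 0 := by
    ext p q; simp
  rw [h]
  exact Matrix.PosSemidef.zero

lemma sum_comm4 {α β γ δ M : Type*} [Fintype α][Fintype β][Fintype γ][Fintype δ]
    [AddCommMonoid M] (f : α → β → γ → δ → M) :
    ∑ b : β, ∑ c : γ, ∑ d : δ, ∑ a : α, f a b c d
      = ∑ a : α, ∑ b : β, ∑ c : γ, ∑ d : δ, f a b c d := by
  have h1 : ∑ b : β, ∑ c : γ, ∑ d : δ, ∑ a : α, f a b c d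
      = ∑ b : β, ∑ c : γ, ∑ a : α, ∑ d : δ, f a b c d :=
    Finset.sum_congr rfl fun b _ => Finset.sum_congr rfl fun c _ => Finset.sum_comm
  have h2 : ∑ b : β, ∑ c : γ, ∑ a : α, ∑ d : δ, f a b c d
      = ∑ b : β, ∑ a : α, ∑ c : γ, ∑ d : δ, f a b c d :=
    Finset.sum_congr rfl fun b _ => Finset.sum_comm
  have h3 : ∑ b : β, ∑ a : α, ∑ c : γ, ∑ d : δ, f a b c d
      = ∑ a : α, ∑ b : β, ∑ c : γ, ∑ d : δ, f a b c d :=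
    Finset.sum_comm
  rw [h1, h2, h3]

end Aux

/-- any CPTP map of the general LOCC* form (conditional probability
linking instruments) can be rewritten in the ∞-shaped loop form via the substitution
Ã_{(i_B,x)|(o_A,o_B)} := ∑_{i_A} p(i_A,i_B|o_A,o_B) A_{x|i_A},
B̃_{(o_A,o_B)|(i_B,x)} := δ_{x,o_A} B_{o_B|i_B}. -/
theorem stmt_4 (ιiA ιiB ιoA ιoB : Type)
    [Fintype ιiA] [DecidableEq ιiA] [Fintype ιiB] [DecidableEq ιiB]
    [Fintype ιoA] [DecidableEq ιoA] [Fintype ιoB] [DecidableEq ιoB]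
    (nA mA nB mB : ℕ)
    (p : ιiA → ιiB → ιoA → ιoB → ℝ)
    (hp0 : ∀ iA iB oA oB, 0 ≤ p iA iB oA oB)
    (hp1 : ∀ oA oB, ∑ iA, ∑ iB, p iA iB oA oB = 1)
    (A : ιoA → ιiA → (Mat (Fin nA) →ₗ[ℂ] Mat (Fin mA)))
    (B : ιoB → ιiB → (Mat (Fin nB) →ₗ[ℂ] Mat (Fin mB)))
    (hACP : ∀ oA iA, IsCP (A oA iA)) (hATP : ∀ iA, IsTP (∑ oA, A oA iA))
    (hBCP : ∀ oB iB, IsCP (B oB iB)) (hBTP : ∀ iB, IsTP (∑ oB, B oB iB))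
    (hM : IsTP (∑ iA, ∑ iB, ∑ oA, ∑ oB,
      (p iA iB oA oB : ℂ) • tensorMap (A oA iA) (B oB iB))) :
    (∀ (a : ιiB × ιoA) (b : ιoA × ιoB),
      IsCP (∑ iA, (p iA a.1 b.1 b.2 : ℂ) • A a.2 iA)) ∧
    (∀ b : ιoA × ιoB, IsTP (∑ a : ιiB × ιoA, ∑ iA, (p iA a.1 b.1 b.2 : ℂ) • A a.2 iA)) ∧
    (∀ (b : ιoA × ιoB) (a : ιiB × ιoA),
      IsCP (if a.2 = b.1 then B b.2 a.1 else 0)) ∧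
    (∀ a : ιiB × ιoA, IsTP (∑ b : ιoA × ιoB, if a.2 = b.1 then B b.2 a.1 else 0)) ∧
    (∑ iA, ∑ iB, ∑ oA, ∑ oB, (p iA iB oA oB : ℂ) • tensorMap (A oA iA) (B oB iB))
      = ∑ a : ιiB × ιoA, ∑ b : ιoA × ιoB,
          tensorMap (∑ iA, (p iA a.1 b.1 b.2 : ℂ) • A a.2 iA)
            (if a.2 = b.1 then B b.2 a.1 else 0) := by
  classical
  refine ⟨?_, ?_, ?_, ?_, ?_⟩
  · -- CP of the tilde-A maps
    intro a b d X hX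
    have key : (Matrix.of fun pq qq : Fin mA × Fin d =>
        ((∑ iA, (p iA a.1 b.1 b.2 : ℂ) • A a.2 iA) (sliceM X pq.2 qq.2)) pq.1 qq.1)
        = ∑ iA, (p iA a.1 b.1 b.2 : ℂ) • (Matrix.of fun pq qq : Fin mA × Fin d =>
            ((A a.2 iA) (sliceM X pq.2 qq.2)) pq.1 qq.1) := by
      ext pq qq
      simp [Matrix.sum_apply]
    rw [key]
    exact psd_sum' _ _ fun iA _ => psd_smul' (hACP a.2 iA d X hX) (hp0 iA a.1 b.1 b.2)
  · -- TP of the tilde-A family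
    intro b X
    have keyA : ∀ iA, ∑ oA, ((A oA iA) X).trace = X.trace := by
      intro iA
      have h := hATP iA X
      rwa [LinearMap.sum_apply, Matrix.trace_sum] at h
    simp only [LinearMap.sum_apply, LinearMap.smul_apply, Matrix.trace_sum, Matrix.trace_smul,
      smul_eq_mul]
    rw [Fintype.sum_prod_type]
    have step : ∀ iB : ιiB, ∑ x : ιoA, ∑ iA : ιiA,
        (p iA iB b.1 b.2 : ℂ) * ((A x iA) X).trace
        = ∑ iA : ιiA, (p iA iB b.1 b.2 : ℂ) * X.trace := by
      intro iB
      rw [Finset.sum_comm]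
      refine Finset.sum_congr rfl fun iA _ => ?_
      rw [← Finset.mul_sum, keyA iA]
    simp only [step]
    have hpc : (∑ iB : ιiB, ∑ iA : ιiA, (p iA iB b.1 b.2 : ℂ)) = 1 := by
      rw [Finset.sum_comm]
      rw [show (∑ iA : ιiA, ∑ iB : ιiB, (p iA iB b.1 b.2 : ℂ))
          = ((∑ iA : ιiA, ∑ iB : ιiB, p iA iB b.1 b.2 : ℝ) : ℂ) by push_cast; rfl]
      rw [hp1 b.1 b.2]
      norm_num
    calc ∑ iB : ιiB, ∑ iA : ιiA, (p iA iB b.1 b.2 : ℂ) * X.trace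
        = (∑ iB : ιiB, ∑ iA : ιiA, (p iA iB b.1 b.2 : ℂ)) * X.trace := by
          simp [Finset.sum_mul]
      _ = X.trace := by rw [hpc, one_mul]
  · -- CP of the tilde-B maps
    intro b a
    by_cases h : a.2 = b.1
    · simpa [h] using hBCP b.2 a.1
    · simpa [h] using isCP_zero
  · -- TP of the tilde-B family
    intro a
    have h : (∑ b : ιoA × ιoB, if a.2 = b.1 then B b.2 a.1 else 0) = ∑ oB, B oB a.1 := by
      rw [Fintype.sum_prod_type, Finset.sum_comm]
      simp [Finset.sum_ite_eq]
    rw [h]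
    exact hBTP a.1
  · -- the sum identity
    have rhs_term : ∀ (a : ιiB × ιoA) (b : ιoA × ιoB),
        tensorMap (∑ iA, (p iA a.1 b.1 b.2 : ℂ) • A a.2 iA)
            (if a.2 = b.1 then B b.2 a.1 else 0)
        = if a.2 = b.1 then
            ∑ iA, (p iA a.1 b.1 b.2 : ℂ) • tensorMap (A a.2 iA) (B b.2 a.1) else 0 := by
      intro a b
      by_cases h : a.2 = b.1
      · simp only [h, if_true, tensorMap_sum_left]
        exact Finset.sum_congr rfl fun iA _ => tensorMap_smul_left _ _ _
      · simp only [h, if_false, tensorMap_zero_right]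
    simp only [rhs_term]
    rw [Fintype.sum_prod_type]
    have step : ∀ (iB : ιiB) (x : ιoA),
        (∑ b : ιoA × ιoB, if x = b.1 then
            ∑ iA, (p iA iB b.1 b.2 : ℂ) • tensorMap (A x iA) (B b.2 iB) else 0)
        = ∑ oB, ∑ iA, (p iA iB x oB : ℂ) • tensorMap (A x iA) (B oB iB) := by
      intro iB x
      rw [Fintype.sum_prod_type, Finset.sum_comm]
      simp [Finset.sum_ite_eq]
    simp only [step]
    exact (sum_comm4 fun iA iB oA oB => (p iA iB oA oB : ℂ) • tensorMap (A oA iA) (B oB iB)).symm
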